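/- Let M be an atomic commutative cancellative monoid. For an atom a of M that is not prime, ω(a) ≤ t(a), where t(a) is the local tame degree of a. -/

import Mathlib

/-- `a` has a factorization into `k` atoms (irreducibles). -/
def FactorLen {M : Type*} [CancelCommMonoid M] (a : M) (k : ℕ) : Prop :=
  ∃ l : List M, l.length = k ∧ (∀ x ∈ l, Irreducible x) ∧ l.prod = a

/-- The length set of `a`, with the convention `L(a) = {0}` for units. -/
def LengthSet {M : Type*} [CancelCommMonoid M] (a : M) : Set ℕ :=
  {k | (IsUnit a ∧ k = 0) ∨ FactorLen a k}

/-- `M` is atomic: every non-unit is a finite product of atoms. -/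
def Atomic (M : Type*) [CancelCommMonoid M] : Prop :=
  ∀ a : M, ¬ IsUnit a → ∃ k, FactorLen a k

/-- `N` is an admissible bound for `ω(a)`: whenever `a` divides a product of elements of `M`,
it divides a subproduct of at most `N` of the factors. -/
def OmegaBound {M : Type*} [CancelCommMonoid M] (a : M) (N : ℕ) : Prop :=
  ∀ l : List M, a ∣ l.prod → ∃ t : List M, t.Sublist l ∧ t.length ≤ N ∧ a ∣ t.prod

/-- `ω(a)`, the smallest `N ∈ ℕ₀ ∪ {∞}` admissible for `a`. -/
noncomputable def omegaVal {M : Type*} [CancelCommMonoid M] (a : M) : ℕ∞ :=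
  sInf {N : ℕ∞ | ∃ n : ℕ, N = (n : ℕ∞) ∧ OmegaBound a n}

/-- `N` is an admissible bound for the local tame degree `t(a)` of an atom `a`: whenever
`a` divides a product of atoms `v₁ ⋯ v_m` but no proper subproduct, the product can be
refactored as `a·u₂⋯u_ℓ` with `max {ℓ, m} ≤ N`. -/
def TameBound {M : Type*} [CancelCommMonoid M] (a : M) (N : ℕ) : Prop :=
  ∀ l : List M, (∀ x ∈ l, Irreducible x) → a ∣ l.prod →
    (∀ t : List M, t.Sublist l → t ≠ l → ¬ a ∣ t.prod) →
    ∃ us : List M, (∀ x ∈ us, Irreducible x) ∧ l.prod = a * us.prod ∧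
      us.length + 1 ≤ N ∧ l.length ≤ N

/-- `t(a)`, the local tame degree of `a`. -/
noncomputable def tameVal {M : Type*} [CancelCommMonoid M] (a : M) : ℕ∞ :=
  sInf {N : ℕ∞ | ∃ n : ℕ, N = (n : ℕ∞) ∧ TameBound a n}

section Aux

variable {M : Type*} [CancelCommMonoid M]

/-- There is a length-minimal sublist whose product is divisible by `a`. -/
lemma exists_minimal_sublist (a : M) (l : List M) (h : a ∣ l.prod) :
    ∃ t : List M, t.Sublist l ∧ a ∣ t.prod ∧
      ∀ t' : List M, t'.Sublist l → a ∣ t'.prod → t.length ≤ t'.length := by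
  classical
  have hne : ∃ k, ∃ t : List M, t.Sublist l ∧ t.length = k ∧ a ∣ t.prod :=
    ⟨l.length, l, List.Sublist.refl l, rfl, h⟩
  obtain ⟨t, ht1, ht2, ht3⟩ := Nat.find_spec hne
  refine ⟨t, ht1, ht3, fun t' h1 h2 => ?_⟩
  rw [ht2]
  exact Nat.find_le ⟨t', h1, rfl, h2⟩

/-- Any sublist of a flatten is a flatten of (pointwise) sublists. -/
lemma sublist_flatten_decomp {α : Type*} :
    ∀ {ws : List (List α)} {s : List α}, s.Sublist ws.flatten →
      ∃ ts : List (List α), List.Forall₂ List.Sublist ts ws ∧ ts.flatten = s := by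
  intro ws
  induction ws with
  | nil =>
    intro s hs
    simp only [List.flatten_nil, List.sublist_nil] at hs
    exact ⟨[], List.Forall₂.nil, by simp [hs]⟩
  | cons w ws ih =>
    intro s hs
    rw [List.flatten_cons, List.sublist_append_iff] at hs
    obtain ⟨s₁, s₂, rfl, h1, h2⟩ := hs
    obtain ⟨ts, hts1, hts2⟩ := ih h2
    exact ⟨s₁ :: ts, List.Forall₂.cons h1 hts1, by simp [hts2]⟩

lemma forall₂_prod_dvd {ts ws : List (List M)}
    (h : List.Forall₂ List.Sublist ts ws) :
    ts.flatten.prod ∣ ws.flatten.prod := by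
  induction h with
  | nil => exact dvd_refl _
  | cons h _ ih =>
    simp only [List.flatten_cons, List.prod_append]
    exact mul_dvd_mul (h.prod_dvd_prod) ih

/-- Key combinatorial lemma: given pointwise sublists `ts` of `ws`, either the flatten of `ts`
has length at least `ws.length`, or some `ts i` is empty, in which case the product of the
flatten of `ts` divides the product of a proper sublist of `ws.map List.prod`. -/
lemma key_lemma {ts ws : List (List M)} (h : List.Forall₂ List.Sublist ts ws) :
    ws.length ≤ ts.flatten.length ∨
      ∃ t' : List M, t'.Sublist (ws.map List.prod) ∧ t'.length < ws.length ∧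
        ts.flatten.prod ∣ t'.prod := by
  induction h with
  | nil => exact Or.inl le_rfl
  | @cons x w ts ws hxw hrest ih =>
    by_cases hx : x = []
    · subst hx
      right
      refine ⟨ws.map List.prod, by simp [List.sublist_cons_self], by simp, ?_⟩
      have : ts.flatten.prod ∣ ws.flatten.prod := forall₂_prod_dvd hrest
      simpa [List.prod_flatten] using this
    · rcases ih with hlen | ⟨t', ht1, ht2, ht3⟩
      · left
        have hx1 : 1 ≤ x.length := List.length_pos_iff.mpr hx
        simp only [List.flatten_cons, List.length_append, List.length_cons]
        omega
      · right
        refine ⟨w.prod :: t', List.Sublist.cons₂ _ (by simpa using ht1), by simpa using ht2, ?_⟩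
        simp only [List.flatten_cons, List.prod_append, List.prod_cons]
        exact mul_dvd_mul hxw.prod_dvd_prod ht3

/-- Every element of a minimal divisible sublist can be factored into atoms. -/
lemma exists_atomic_factorization (hM : Atomic M) :
    ∀ (t : List M), (∀ x ∈ t, ¬ IsUnit x) →
      ∃ ws : List (List M), ws.map List.prod = t ∧
        (∀ w ∈ ws, ∀ x ∈ w, Irreducible x) := by
  intro t
  induction t with
  | nil => exact fun _ => ⟨[], rfl, by simp⟩
  | cons x t ih =>
    intro hnu
    obtain ⟨ws, hws1, hws2⟩ := ih (fun y hy => hnu y (List.mem_cons_of_mem _ hy))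
    obtain ⟨k, w, _, hw2, hw3⟩ := hM x (hnu x List.mem_cons_self)
    refine ⟨w :: ws, ?_, ?_⟩
    · simp [hws1, hw3]
    · intro w' hw' y hy
      rcases List.mem_cons.mp hw' with rfl | hw'
      · exact hw2 y hy
      · exact hws2 w' hw' y hy

lemma tameBound_omegaBound (a : M) (ha : Irreducible a) (hM : Atomic M)
    {n : ℕ} (htb : TameBound a n) : OmegaBound a n := by
  classical
  intro l hdvd
  -- choose a minimal sublist t of l with a ∣ t.prod
  obtain ⟨t, ht1, ht2, ht3⟩ := exists_minimal_sublist a l hdvd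
  refine ⟨t, ht1, ?_, ht2⟩
  -- every element of t is a non-unit
  have hnu : ∀ x ∈ t, ¬ IsUnit x := by
    intro x hx hux
    have hprod : x * (t.erase x).prod = t.prod := List.prod_erase hx
    have hdvd' : a ∣ (t.erase x).prod := by
      obtain ⟨c, hc⟩ := ht2
      obtain ⟨u, hu⟩ := hux
      refine ⟨c * ((u⁻¹ : Mˣ) : M), ?_⟩
      have h0 : (x * (t.erase x).prod) * ((u⁻¹ : Mˣ) : M)
          = (a * c) * ((u⁻¹ : Mˣ) : M) := by rw [hprod, hc]
      calc (t.erase x).prod = (x * (t.erase x).prod) * ((u⁻¹ : Mˣ) : M) := by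
            rw [mul_comm x, mul_assoc, ← hu]; simp
        _ = a * (c * ((u⁻¹ : Mˣ) : M)) := by rw [h0, mul_assoc]
    have hlen := ht3 _ ((List.erase_sublist : (t.erase x).Sublist t).trans ht1) hdvd'
    have : (t.erase x).length < t.length := by
      rw [List.length_erase_of_mem hx]
      have : 0 < t.length := List.length_pos_iff.mpr (List.ne_nil_of_mem hx)
      omega
    omega
  -- factor each element of t into atoms
  obtain ⟨ws, hws1, hws2⟩ := exists_atomic_factorization hM t hnu
  -- a divides the product of the atoms
  have hflat : ws.flatten.prod = t.prod := by
    rw [← hws1, List.prod_flatten]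
  -- choose a minimal sublist s of ws.flatten with a ∣ s.prod
  obtain ⟨s, hs1, hs2, hs3⟩ := exists_minimal_sublist a ws.flatten (hflat ▸ ht2)
  have hsirr : ∀ x ∈ s, Irreducible x := by
    intro x hx
    have hx' : x ∈ ws.flatten := hs1.mem hx
    obtain ⟨w, hw, hxw⟩ := List.mem_flatten.mp hx'
    exact hws2 w hw x hxw
  -- s admits no proper dividing sublist
  have hsmin : ∀ t' : List M, t'.Sublist s → t' ≠ s → ¬ a ∣ t'.prod := by
    intro t' h1 h2 h3
    have hlt : t'.length < s.length :=
      lt_of_le_of_ne h1.length_le (fun he => h2 (h1.eq_of_length he))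
    have := hs3 t' (h1.trans hs1) h3
    omega
  obtain ⟨us, _, _, _, hslen⟩ := htb s hsirr hs2 hsmin
  -- decompose s as a flatten of pointwise sublists of ws
  obtain ⟨ts, hts1, hts2⟩ := sublist_flatten_decomp hs1
  rcases key_lemma hts1 with hlen | ⟨t', h1, h2, h3⟩
  · -- t.length = ws.length ≤ s.length ≤ n
    have : t.length = ws.length := by rw [← hws1, List.length_map]
    rw [hts2] at hlen
    omega
  · -- contradiction with minimality of t
    exfalso
    rw [hws1] at h1
    have hadvd : a ∣ t'.prod := (hts2 ▸ hs2).trans h3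
    have := ht3 t' (h1.trans ht1) hadvd
    have hteq : t.length = ws.length := by rw [← hws1, List.length_map]
    omega

end Aux

/-- In an atomic cancellative commutative monoid, for an atom `a` that is not prime,
`ω(a) ≤ t(a)`. -/
theorem omegaVal_le_tameVal {M : Type*} [CancelCommMonoid M] (hM : Atomic M)
    (a : M) (ha : Irreducible a) (hnp : ¬ ∀ b c : M, a ∣ b * c → a ∣ b ∨ a ∣ c) :
    omegaVal a ≤ tameVal a := by
  apply le_sInf
  rintro N ⟨n, rfl, htb⟩
  exact sInf_le ⟨n, rfl, tameBound_omegaBound a ha hM htb⟩
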